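/- Let d ≥ 1, α ∈ ℝ, c ∈ ℝ and L > 0, and let B : ℝ → ℝ be four times differentiable on (0,L] with B^(k)(t) = (α)_k · c · t^(α−k) + o(t^(α−k)) as t ↓ 0 for each k = 0, 1, 2, 3, 4, where (α)_k = α(α−1)⋯(α−k+1). Then for every u ∈ ℝ^d with 0 < ‖u‖ < L, the iterated partial derivatives Σ_{g=1}^d Σ_{g'=1}^d (∂²/∂u_{g'}²)(∂²/∂u_g²)[B(‖u‖)] exist and satisfy Σ_{g,g'} (∂²/∂u_{g'}²)(∂²/∂u_g²)[B(‖u‖)] = c·M(α,d)·‖u‖^{α−4} + o(‖u‖^{α−4}) as u → 0 with u ≠ 0, where M(α,d) = α(α−2)·[(α−4)·((α−6) + 2d + 4) + 2d + d²]. In particular, for f(u) = ‖u‖^α and every u ≠ 0, Σ_{g=1}^d Σ_{g'=1}^d (∂²/∂u_{g'}²)(∂²/∂u_g²) f(u) = M(α,d)·‖u‖^{α−4}. -/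

import Mathlib

open Filter Asymptotics
open scoped Topology

noncomputable section

/-- The falling factorial `(α)_k = α (α − 1) ⋯ (α − k + 1)`, with `(α)_0 = 1`. -/
def fallingFactorial (α : ℝ) (k : ℕ) : ℝ := ∏ i ∈ Finset.range k, (α - i)

/-- The constant `M(α,d) = α(α−2)[(α−4)((α−6) + 2d + 4) + 2d + d²]`. -/
def Mconst (α : ℝ) (d : ℕ) : ℝ :=
  α * (α - 2) * ((α - 4) * ((α - 6) + 2 * d + 4) + 2 * d + d ^ 2)

/-- The punctured ball `{u : 0 < ‖u‖ < L}` in `ℝ^d`. -/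
def puncturedBall (d : ℕ) (L : ℝ) : Set (EuclideanSpace ℝ (Fin d)) :=
  {u | 0 < ‖u‖ ∧ ‖u‖ < L}


variable {d : ℕ}

lemma sq_sum_norm (u : EuclideanSpace ℝ (Fin d)) : ∑ i, (u i) ^ 2 = ‖u‖ ^ 2 := by
  rw [← real_inner_self_eq_norm_sq]
  simp only [PiLp.inner_apply, RCLike.inner_apply, conj_trivial, sq, mul_comm]

lemma hasFDerivAt_norm_euc {u : EuclideanSpace ℝ (Fin d)} (hu : u ≠ 0) :
    HasFDerivAt (fun v : EuclideanSpace ℝ (Fin d) => ‖v‖) (‖u‖⁻¹ • innerSL ℝ u) u := by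
  have hr : (0:ℝ) < ‖u‖ := norm_pos_iff.mpr hu
  have h1 : HasFDerivAt (fun v : EuclideanSpace ℝ (Fin d) => ‖v‖ ^ 2)
      (2 • (innerSL ℝ u)) u := by
    simpa using (hasFDerivAt_id u).norm_sq
  have h2 : HasDerivAt Real.sqrt (1 / (2 * Real.sqrt (‖u‖ ^ 2))) (‖u‖ ^ 2) :=
    Real.hasDerivAt_sqrt (by positivity)
  have h3 := h2.comp_hasFDerivAt u h1
  have hfun : (fun v : EuclideanSpace ℝ (Fin d) => Real.sqrt (‖v‖ ^ 2))
      = fun v => ‖v‖ := by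
    funext v; exact Real.sqrt_sq (norm_nonneg v)
  rw [show (Real.sqrt ∘ fun v : EuclideanSpace ℝ (Fin d) => ‖v‖ ^ 2) = fun v => ‖v‖ from hfun] at h3
  refine h3.congr_fderiv ?_
  rw [Real.sqrt_sq (norm_nonneg u)]
  ext w
  simp [smul_smul]
  field_simp

lemma hasFDerivAt_phi_norm {φ : ℝ → ℝ} {φ' : ℝ} {u : EuclideanSpace ℝ (Fin d)}
    (hu : u ≠ 0) (h : HasDerivAt φ φ' ‖u‖) :
    HasFDerivAt (fun v : EuclideanSpace ℝ (Fin d) => φ ‖v‖)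
      ((φ' * ‖u‖⁻¹) • innerSL ℝ u) u := by
  have := h.comp_hasFDerivAt u (hasFDerivAt_norm_euc hu)
  simp only [smul_smul] at this
  exact this

lemma keyB {B : ℝ → ℝ} {L : ℝ} (hB : ContDiffOn ℝ 4 B (Set.Ioc 0 L)) {k : ℕ} (hk : k < 4)
    {r : ℝ} (hr : r ∈ Set.Ioo 0 L) :
    HasDerivAt (iteratedDeriv k B) (iteratedDeriv (k + 1) B r) r := by
  have hBo : ContDiffOn ℝ 4 B (Set.Ioo 0 L) := hB.mono Set.Ioo_subset_Ioc_self
  have hmem : Set.Ioo 0 L ∈ 𝓝 r := isOpen_Ioo.mem_nhds hr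
  have heq : ∀ᶠ t in 𝓝 r, iteratedDerivWithin k B (Set.Ioo 0 L) t = iteratedDeriv k B t := by
    filter_upwards [hmem] with t ht
    rw [iteratedDerivWithin_eq_iteratedFDerivWithin, iteratedDeriv_eq_iteratedFDeriv,
      iteratedFDerivWithin_of_isOpen _ isOpen_Ioo ht]
  have hdiff : DifferentiableWithinAt ℝ (iteratedDerivWithin k B (Set.Ioo 0 L))
      (Set.Ioo 0 L) r := by
    refine (hBo.differentiableOn_iteratedDerivWithin ?_ isOpen_Ioo.uniqueDiffOn) r hr
    exact_mod_cast hk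
  have hdiffAt : DifferentiableAt ℝ (iteratedDeriv k B) r :=
    (hdiff.differentiableAt hmem).congr_of_eventuallyEq (heq.mono fun t ht => ht.symm)
  rw [iteratedDeriv_succ]
  exact hdiffAt.hasDerivAt

/-- A generic term `C * B⁽ᵏ⁾(‖v‖) * (v g)^a * (v g')^b * ‖v‖⁻ᵐ`. -/
def trm (B : ℝ → ℝ) {d : ℕ} (g g' : Fin d) (C : ℝ) (k a b m : ℕ)
    (v : EuclideanSpace ℝ (Fin d)) : ℝ :=
  C * (iteratedDeriv k B ‖v‖ * ((v g) ^ a * ((v g') ^ b * (‖v‖⁻¹) ^ m)))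

lemma trm_step {B : ℝ → ℝ} {L : ℝ} (hB : ContDiffOn ℝ 4 B (Set.Ioc 0 L))
    {g g' : Fin d} {u : EuclideanSpace ℝ (Fin d)} (hu : ‖u‖ ∈ Set.Ioo 0 L)
    (C : ℝ) {k : ℕ} (hk : k < 4) (a b m : ℕ) (j : Fin d) :
    ∃ Φ : EuclideanSpace ℝ (Fin d) →L[ℝ] ℝ, HasFDerivAt (trm B g g' C k a b m) Φ u ∧
      Φ (EuclideanSpace.single j 1) =
        C * (iteratedDeriv (k+1) B ‖u‖ * (u j) * ((u g) ^ a * ((u g') ^ b * (‖u‖⁻¹) ^ (m+1)))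
          + iteratedDeriv k B ‖u‖ *
            ( (a:ℝ) * (if g = j then 1 else 0) * ((u g) ^ (a-1) * ((u g') ^ b * (‖u‖⁻¹) ^ m))
              + (b:ℝ) * (if g' = j then 1 else 0) * ((u g) ^ a * ((u g') ^ (b-1) * (‖u‖⁻¹) ^ m))
              - (m:ℝ) * (u j) * ((u g) ^ a * ((u g') ^ b * (‖u‖⁻¹) ^ (m+2))))) := by
  have hr0 : ‖u‖ ≠ 0 := ne_of_gt hu.1
  have hu0 : u ≠ 0 := by simpa [norm_pos_iff] using hu.1
  have atomB : HasFDerivAt (fun v : EuclideanSpace ℝ (Fin d) => iteratedDeriv k B ‖v‖)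
      ((iteratedDeriv (k+1) B ‖u‖ * ‖u‖⁻¹) • innerSL ℝ u) u :=
    hasFDerivAt_phi_norm hu0 (keyB hB hk hu)
  have hprojg : HasFDerivAt (fun v : EuclideanSpace ℝ (Fin d) => v g)
      (EuclideanSpace.proj g : EuclideanSpace ℝ (Fin d) →L[ℝ] ℝ) u := by
    have h := ContinuousLinearMap.hasFDerivAt (𝕜 := ℝ) (E := EuclideanSpace ℝ (Fin d)) (F := ℝ)
      (f := EuclideanSpace.proj g) (x := u)
    simpa [PiLp.proj_apply] using h
  have hprojg' : HasFDerivAt (fun v : EuclideanSpace ℝ (Fin d) => v g')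
      (EuclideanSpace.proj g' : EuclideanSpace ℝ (Fin d) →L[ℝ] ℝ) u := by
    have h := ContinuousLinearMap.hasFDerivAt (𝕜 := ℝ) (E := EuclideanSpace ℝ (Fin d)) (F := ℝ)
      (f := EuclideanSpace.proj g') (x := u)
    simpa [PiLp.proj_apply] using h
  have atomX : HasFDerivAt (fun v : EuclideanSpace ℝ (Fin d) => (v g) ^ a)
      (((a:ℝ) * (u g) ^ (a-1)) • (EuclideanSpace.proj g : EuclideanSpace ℝ (Fin d) →L[ℝ] ℝ)) u :=
    (hasDerivAt_pow a (u g)).comp_hasFDerivAt u hprojg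
  have atomY : HasFDerivAt (fun v : EuclideanSpace ℝ (Fin d) => (v g') ^ b)
      (((b:ℝ) * (u g') ^ (b-1)) • (EuclideanSpace.proj g' : EuclideanSpace ℝ (Fin d) →L[ℝ] ℝ)) u :=
    (hasDerivAt_pow b (u g')).comp_hasFDerivAt u hprojg'
  have atomI : HasFDerivAt (fun v : EuclideanSpace ℝ (Fin d) => (‖v‖⁻¹) ^ m)
      ((((m:ℝ) * (‖u‖⁻¹) ^ (m-1) * (-(‖u‖ ^ 2)⁻¹)) * ‖u‖⁻¹) • innerSL ℝ u) u :=
    hasFDerivAt_phi_norm hu0 ((hasDerivAt_inv hr0).pow m)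
  refine ⟨_, (atomB.mul (atomX.mul (atomY.mul atomI))).const_mul C, ?_⟩
  simp only [ContinuousLinearMap.add_apply, ContinuousLinearMap.smul_apply, innerSL_apply_apply,
    EuclideanSpace.inner_single_right, PiLp.proj_apply, EuclideanSpace.single_apply,
    smul_eq_mul, map_one, conj_trivial, Pi.mul_apply]
  simp only [← inv_pow]
  rcases m with _ | m'
  · simp only [Nat.cast_zero, pow_zero, Nat.zero_sub, zero_mul, mul_zero]
    ring
  · simp only [Nat.add_sub_cancel]
    push_cast
    ring

section Formulas

variable (B : ℝ → ℝ) {d : ℕ} (g g' : Fin d)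

/-- delta -/
def dlt (g g' : Fin d) : ℝ := if g = g' then 1 else 0

def Fone : EuclideanSpace ℝ (Fin d) → ℝ := fun u => trm B g g' 1 1 1 0 1 u

def Ftwo : EuclideanSpace ℝ (Fin d) → ℝ := fun u =>
  trm B g g' 1 2 2 0 2 u + trm B g g' 1 1 0 0 1 u + trm B g g' (-1) 1 2 0 3 u

def Fthree : EuclideanSpace ℝ (Fin d) → ℝ := fun u =>
  trm B g g' 1 3 2 1 3 u + trm B g g' (2 * dlt g g') 2 1 0 2 u + trm B g g' (-3) 2 2 1 4 u
    + trm B g g' 1 2 0 1 2 u + trm B g g' (-1) 1 0 1 3 u + trm B g g' (-2 * dlt g g') 1 1 0 3 u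
    + trm B g g' 3 1 2 1 5 u

def Ffour : EuclideanSpace ℝ (Fin d) → ℝ := fun u =>
  trm B g g' 1 4 2 2 4 u + trm B g g' (4 * dlt g g') 3 1 1 3 u + trm B g g' 1 3 2 0 3 u
    + trm B g g' 1 3 0 2 3 u + trm B g g' (-6) 3 2 2 5 u
    + trm B g g' (1 + 2 * dlt g g') 2 0 0 2 u + trm B g g' (-12 * dlt g g') 2 1 1 4 u
    + trm B g g' (-3) 2 2 0 4 u + trm B g g' (-3) 2 0 2 4 u + trm B g g' 15 2 2 2 6 u
    + trm B g g' (-(1 + 2 * dlt g g')) 1 0 0 3 u + trm B g g' 3 1 2 0 5 u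
    + trm B g g' 3 1 0 2 5 u + trm B g g' (12 * dlt g g') 1 1 1 5 u
    + trm B g g' (-15) 1 2 2 7 u

variable {B g g'} {L : ℝ} {u : EuclideanSpace ℝ (Fin d)}

lemma step0 (hB : ContDiffOn ℝ 4 B (Set.Ioc 0 L)) (hu : ‖u‖ ∈ Set.Ioo 0 L) :
    ∃ Φ : EuclideanSpace ℝ (Fin d) →L[ℝ] ℝ,
      HasFDerivAt (fun v : EuclideanSpace ℝ (Fin d) => B ‖v‖) Φ u ∧
      Φ (EuclideanSpace.single g 1) = Fone B g g' u := by
  obtain ⟨Φ, h, e⟩ := trm_step hB (g := g) (g' := g') hu 1 (k := 0) (by norm_num) 0 0 0 g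
  refine ⟨Φ, h.congr_of_eventuallyEq (Filter.Eventually.of_forall fun v => by
    simp [trm, iteratedDeriv_zero]), ?_⟩
  rw [e]
  simp only [Fone, trm, iteratedDeriv_zero]
  norm_num
  ring

lemma step1 (hB : ContDiffOn ℝ 4 B (Set.Ioc 0 L)) (hu : ‖u‖ ∈ Set.Ioo 0 L) :
    ∃ Φ : EuclideanSpace ℝ (Fin d) →L[ℝ] ℝ,
      HasFDerivAt (Fone B g g') Φ u ∧
      Φ (EuclideanSpace.single g 1) = Ftwo B g g' u := by
  obtain ⟨Φ, h, e⟩ := trm_step hB (g := g) (g' := g') hu 1 (k := 1) (by norm_num) 1 0 1 g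
  refine ⟨Φ, h, ?_⟩
  rw [e]
  simp only [Ftwo, trm]
  norm_num
  ring

lemma step2 (hB : ContDiffOn ℝ 4 B (Set.Ioc 0 L)) (hu : ‖u‖ ∈ Set.Ioo 0 L) :
    ∃ Φ : EuclideanSpace ℝ (Fin d) →L[ℝ] ℝ,
      HasFDerivAt (Ftwo B g g') Φ u ∧
      Φ (EuclideanSpace.single g' 1) = Fthree B g g' u := by
  obtain ⟨Φ1, h1, e1⟩ := trm_step hB (g := g) (g' := g') hu 1 (k := 2) (by norm_num) 2 0 2 g'
  obtain ⟨Φ2, h2, e2⟩ := trm_step hB (g := g) (g' := g') hu 1 (k := 1) (by norm_num) 0 0 1 g'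
  obtain ⟨Φ3, h3, e3⟩ := trm_step hB (g := g) (g' := g') hu (-1) (k := 1) (by norm_num) 2 0 3 g'
  refine ⟨Φ1 + Φ2 + Φ3, (h1.add h2).add h3, ?_⟩
  simp only [ContinuousLinearMap.add_apply, e1, e2, e3, Fthree, trm, dlt]
  rcases eq_or_ne g g' with h | h
  · subst h
    simp only [if_pos rfl]
    norm_num
    ring
  · simp only [if_neg h, if_neg (Ne.symm h)]
    norm_num
    ring

lemma step3 (hB : ContDiffOn ℝ 4 B (Set.Ioc 0 L)) (hu : ‖u‖ ∈ Set.Ioo 0 L) :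
    ∃ Φ : EuclideanSpace ℝ (Fin d) →L[ℝ] ℝ,
      HasFDerivAt (Fthree B g g') Φ u ∧
      Φ (EuclideanSpace.single g' 1) = Ffour B g g' u := by
  obtain ⟨Φ1, h1, e1⟩ := trm_step hB (g := g) (g' := g') hu 1 (k := 3) (by norm_num) 2 1 3 g'
  obtain ⟨Φ2, h2, e2⟩ := trm_step hB (g := g) (g' := g') hu (2 * dlt g g') (k := 2)
    (by norm_num) 1 0 2 g'
  obtain ⟨Φ3, h3, e3⟩ := trm_step hB (g := g) (g' := g') hu (-3) (k := 2) (by norm_num) 2 1 4 g'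
  obtain ⟨Φ4, h4, e4⟩ := trm_step hB (g := g) (g' := g') hu 1 (k := 2) (by norm_num) 0 1 2 g'
  obtain ⟨Φ5, h5, e5⟩ := trm_step hB (g := g) (g' := g') hu (-1) (k := 1) (by norm_num) 0 1 3 g'
  obtain ⟨Φ6, h6, e6⟩ := trm_step hB (g := g) (g' := g') hu (-2 * dlt g g') (k := 1)
    (by norm_num) 1 0 3 g'
  obtain ⟨Φ7, h7, e7⟩ := trm_step hB (g := g) (g' := g') hu 3 (k := 1) (by norm_num) 2 1 5 g'
  refine ⟨Φ1 + Φ2 + Φ3 + Φ4 + Φ5 + Φ6 + Φ7,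
    (((((h1.add h2).add h3).add h4).add h5).add h6).add h7, ?_⟩
  simp only [ContinuousLinearMap.add_apply, e1, e2, e3, e4, e5, e6, e7, Ffour, trm, dlt]
  rcases eq_or_ne g g' with h | h
  · subst h
    simp only [if_pos rfl]
    norm_num
    ring
  · simp only [if_neg h, if_neg (Ne.symm h)]
    norm_num
    ring

end Formulas

section Peel

variable {S : Set (EuclideanSpace ℝ (Fin d))}

lemma peel {n : ℕ} {f : EuclideanSpace ℝ (Fin d) → ℝ} (hS : UniqueDiffOn ℝ S)
    (hf : ContDiffOn ℝ (n + 1 : ℕ) f S) {u : EuclideanSpace ℝ (Fin d)} (hu : u ∈ S)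
    (m : Fin n → EuclideanSpace ℝ (Fin d)) (v : EuclideanSpace ℝ (Fin d)) :
    iteratedFDerivWithin ℝ (n + 1) f S u (Fin.snoc m v) =
      iteratedFDerivWithin ℝ n (fun y => fderivWithin ℝ f S y v) S u m := by
  rw [iteratedFDerivWithin_succ_apply_right hS hu]
  simp only [Fin.init_snoc, Fin.snoc_last]
  have hfd : ContDiffOn ℝ n (fderivWithin ℝ f S) S := by
    refine hf.fderivWithin hS ?_
    exact_mod_cast le_refl _
  have hcomp := (ContinuousLinearMap.apply ℝ ℝ v).iteratedFDerivWithin_comp_left (hfd u hu) hS hu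
    (le_refl (n : WithTop ℕ∞))
  have h2 : (fun y => fderivWithin ℝ f S y v)
      = (ContinuousLinearMap.apply ℝ ℝ v) ∘ (fderivWithin ℝ f S) := rfl
  rw [h2, hcomp]
  simp

end Peel


lemma isOpen_puncturedBall {L : ℝ} : IsOpen (puncturedBall d L) := by
  have : puncturedBall d L = (fun u : EuclideanSpace ℝ (Fin d) => ‖u‖) ⁻¹' Set.Ioo 0 L := by
    ext u; simp [puncturedBall, Set.mem_Ioo]
  rw [this]
  exact isOpen_Ioo.preimage continuous_norm

lemma mem_puncturedBall_iff {L : ℝ} {u : EuclideanSpace ℝ (Fin d)} :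
    u ∈ puncturedBall d L ↔ ‖u‖ ∈ Set.Ioo 0 L := Iff.rfl

lemma contDiffOn_radial {B : ℝ → ℝ} {L : ℝ} (hB : ContDiffOn ℝ 4 B (Set.Ioc 0 L)) :
    ContDiffOn ℝ 4 (fun u : EuclideanSpace ℝ (Fin d) => B ‖u‖) (puncturedBall d L) := by
  intro u hu
  have hu' : ‖u‖ ∈ Set.Ioo 0 L := hu
  have h1 : ContDiffAt ℝ 4 (fun v : EuclideanSpace ℝ (Fin d) => ‖v‖) u :=
    contDiffAt_norm (𝕜 := ℝ) (by simpa [norm_pos_iff] using hu'.1)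
  have h2 : ContDiffAt ℝ 4 B ‖u‖ :=
    (hB.mono Set.Ioo_subset_Ioc_self).contDiffAt (isOpen_Ioo.mem_nhds hu')
  exact (h2.comp u h1).contDiffWithinAt

lemma main_formula {B : ℝ → ℝ} {L : ℝ} (hB : ContDiffOn ℝ 4 B (Set.Ioc 0 L))
    {u : EuclideanSpace ℝ (Fin d)} (hu : u ∈ puncturedBall d L) (g g' : Fin d) :
    iteratedFDerivWithin ℝ 4 (fun v : EuclideanSpace ℝ (Fin d) => B ‖v‖) (puncturedBall d L) u
        ![EuclideanSpace.single g' (1 : ℝ), EuclideanSpace.single g' (1 : ℝ),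
          EuclideanSpace.single g (1 : ℝ), EuclideanSpace.single g (1 : ℝ)]
      = Ffour B g g' u := by
  set S := puncturedBall d L with hSdef
  set v : EuclideanSpace ℝ (Fin d) := EuclideanSpace.single g (1 : ℝ) with hv
  set w : EuclideanSpace ℝ (Fin d) := EuclideanSpace.single g' (1 : ℝ) with hw
  have hSo : IsOpen S := isOpen_puncturedBall
  have hS : UniqueDiffOn ℝ S := hSo.uniqueDiffOn
  have hf4 : ContDiffOn ℝ ((3:ℕ) + 1 : ℕ) (fun v : EuclideanSpace ℝ (Fin d) => B ‖v‖) S := by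
    exact_mod_cast contDiffOn_radial hB
  set f : EuclideanSpace ℝ (Fin d) → ℝ := fun v => B ‖v‖ with hf
  set G1 : EuclideanSpace ℝ (Fin d) → ℝ := fun y => fderivWithin ℝ f S y v with hG1
  set G2 : EuclideanSpace ℝ (Fin d) → ℝ := fun y => fderivWithin ℝ G1 S y v with hG2
  set G3 : EuclideanSpace ℝ (Fin d) → ℝ := fun y => fderivWithin ℝ G2 S y w with hG3
  set G4 : EuclideanSpace ℝ (Fin d) → ℝ := fun y => fderivWithin ℝ G3 S y w with hG4
  have hg3 : ContDiffOn ℝ ((2:ℕ) + 1 : ℕ) G1 S := by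
    refine ContDiffOn.clm_apply ?_ contDiffOn_const
    refine hf4.fderivWithin hS ?_
    exact_mod_cast le_refl _
  have hg2 : ContDiffOn ℝ ((1:ℕ) + 1 : ℕ) G2 S := by
    refine ContDiffOn.clm_apply ?_ contDiffOn_const
    refine hg3.fderivWithin hS ?_
    exact_mod_cast le_refl _
  have hg1 : ContDiffOn ℝ ((0:ℕ) + 1 : ℕ) G3 S := by
    refine ContDiffOn.clm_apply ?_ contDiffOn_const
    refine hg2.fderivWithin hS ?_
    exact_mod_cast le_refl _
  have hm4 : (![w, w, v, v] : Fin 4 → EuclideanSpace ℝ (Fin d)) = Fin.snoc ![w, w, v] v := by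
    funext i; fin_cases i <;> rfl
  have hm3 : (![w, w, v] : Fin 3 → EuclideanSpace ℝ (Fin d)) = Fin.snoc ![w, w] v := by
    funext i; fin_cases i <;> rfl
  have hm2 : (![w, w] : Fin 2 → EuclideanSpace ℝ (Fin d)) = Fin.snoc ![w] w := by
    funext i; fin_cases i <;> rfl
  have hm1 : (![w] : Fin 1 → EuclideanSpace ℝ (Fin d)) = Fin.snoc ![] w := by
    funext i; fin_cases i <;> rfl
  have key : iteratedFDerivWithin ℝ 4 f S u ![w, w, v, v] = G4 u := by
    rw [hm4, peel hS hf4 hu _ v, hm3, peel hS hg3 hu _ v, hm2, peel hS hg2 hu _ w, hm1,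
      peel hS hg1 hu _ w]
    exact iteratedFDerivWithin_zero_apply _
  rw [key]
  -- now transfer along the explicit formulas
  have hE1 : Set.EqOn G1 (Fone B g g') S := by
    intro y hy
    obtain ⟨Φ, h, e⟩ := step0 (g := g) (g' := g') hB hy
    show fderivWithin ℝ f S y v = Fone B g g' y
    rw [fderivWithin_of_isOpen hSo hy, h.fderiv]
    exact e
  have hE2 : Set.EqOn G2 (Ftwo B g g') S := by
    intro y hy
    obtain ⟨Φ, h, e⟩ := step1 (g := g) (g' := g') hB hy
    show fderivWithin ℝ G1 S y v = Ftwo B g g' y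
    rw [fderivWithin_congr hE1 (hE1 hy), fderivWithin_of_isOpen hSo hy, h.fderiv]
    exact e
  have hE3 : Set.EqOn G3 (Fthree B g g') S := by
    intro y hy
    obtain ⟨Φ, h, e⟩ := step2 (g := g) (g' := g') hB hy
    show fderivWithin ℝ G2 S y w = Fthree B g g' y
    rw [fderivWithin_congr hE2 (hE2 hy), fderivWithin_of_isOpen hSo hy, h.fderiv]
    exact e

  obtain ⟨Φ, h, e⟩ := step3 (g := g) (g' := g') hB hu
  show fderivWithin ℝ G3 S u w = Ffour B g g' u
  rw [fderivWithin_congr hE3 (hE3 hu), fderivWithin_of_isOpen hSo hu, h.fderiv]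
  exact e

lemma sum_Ffour {B : ℝ → ℝ} {u : EuclideanSpace ℝ (Fin d)} (hu0 : u ≠ 0) :
    ∑ g : Fin d, ∑ g' : Fin d, Ffour B g g' u =
      iteratedDeriv 4 B ‖u‖
        + (2 * (d:ℝ) - 2) * iteratedDeriv 3 B ‖u‖ * ‖u‖⁻¹
        + ((d:ℝ) ^ 2 - 4 * d + 3) * iteratedDeriv 2 B ‖u‖ * (‖u‖⁻¹) ^ 2
        - ((d:ℝ) ^ 2 - 4 * d + 3) * iteratedDeriv 1 B ‖u‖ * (‖u‖⁻¹) ^ 3 := by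
  have hr0 : ‖u‖ ≠ 0 := by simpa [norm_pos_iff] using hu0
  set r : ℝ := ‖u‖ with hrdef
  set ι : ℝ := ‖u‖⁻¹ with hidef
  set B1 : ℝ := iteratedDeriv 1 B ‖u‖
  set B2 : ℝ := iteratedDeriv 2 B ‖u‖
  set B3 : ℝ := iteratedDeriv 3 B ‖u‖
  set B4 : ℝ := iteratedDeriv 4 B ‖u‖
  have hx2 : ∑ i, (u i) ^ 2 = r ^ 2 := sq_sum_norm u
  have helper1 : ∀ (a b c e : ℝ) (g : Fin d),
      ∑ g' : Fin d, (a + b * (u g') ^ 2 + (if g = g' then (1:ℝ) else 0) * (c + e * u g'))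
        = d * a + b * r ^ 2 + (c + e * u g) := by
    intro a b c e g
    rw [Finset.sum_add_distrib, Finset.sum_add_distrib]
    congr 1
    · congr 1
      · simp [mul_comm]
      · rw [← Finset.mul_sum, hx2]
    · simp only [ite_mul, one_mul, zero_mul]
      rw [Finset.sum_ite_eq]
      simp
  have helper2 : ∀ p q : ℝ, ∑ g : Fin d, (p + q * (u g) ^ 2) = d * p + q * r ^ 2 := by
    intro p q
    rw [Finset.sum_add_distrib, Finset.sum_const, ← Finset.mul_sum, hx2]
    simp [mul_comm]
  have expand : ∀ g g' : Fin d, Ffour B g g' u =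
      (B3 * (u g)^2 * ι^3 + B2 * (ι^2 - 3 * (u g)^2 * ι^4) + B1 * (-ι^3 + 3 * (u g)^2 * ι^5))
      + (B4 * (u g)^2 * ι^4 + B3 * ι^3 - 6 * B3 * (u g)^2 * ι^5 - 3 * B2 * ι^4
          + 15 * B2 * (u g)^2 * ι^6 + 3 * B1 * ι^5 - 15 * B1 * (u g)^2 * ι^7) * (u g')^2
      + (if g = g' then (1:ℝ) else 0) *
          ((2 * B2 * ι^2 - 2 * B1 * ι^3)
            + (4 * B3 * (u g) * ι^3 - 12 * B2 * (u g) * ι^4 + 12 * B1 * (u g) * ι^5) * u g') := by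
    intro g g'
    simp only [Ffour, trm, dlt]
    ring
  calc ∑ g : Fin d, ∑ g' : Fin d, Ffour B g g' u
      = ∑ g : Fin d,
          (↑d * (B3 * (u g)^2 * ι^3 + B2 * (ι^2 - 3 * (u g)^2 * ι^4)
              + B1 * (-ι^3 + 3 * (u g)^2 * ι^5))
            + (B4 * (u g)^2 * ι^4 + B3 * ι^3 - 6 * B3 * (u g)^2 * ι^5 - 3 * B2 * ι^4
              + 15 * B2 * (u g)^2 * ι^6 + 3 * B1 * ι^5 - 15 * B1 * (u g)^2 * ι^7) * r^2
            + ((2 * B2 * ι^2 - 2 * B1 * ι^3)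
              + (4 * B3 * (u g) * ι^3 - 12 * B2 * (u g) * ι^4 + 12 * B1 * (u g) * ι^5) * u g)) := by
        refine Finset.sum_congr rfl fun g _ => ?_
        rw [Finset.sum_congr rfl fun g' _ => expand g g', helper1]
    _ = ∑ g : Fin d,
          ((↑d * (B2 * ι^2 - B1 * ι^3) + (B3 * ι^3 - 3 * B2 * ι^4 + 3 * B1 * ι^5) * r^2
              + (2 * B2 * ι^2 - 2 * B1 * ι^3))
            + (↑d * (B3 * ι^3 - 3 * B2 * ι^4 + 3 * B1 * ι^5)
              + (B4 * ι^4 - 6 * B3 * ι^5 + 15 * B2 * ι^6 - 15 * B1 * ι^7) * r^2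
              + (4 * B3 * ι^3 - 12 * B2 * ι^4 + 12 * B1 * ι^5)) * (u g)^2) := by
        refine Finset.sum_congr rfl fun g _ => ?_
        ring
    _ = _ := by
        rw [helper2, hidef, hrdef]
        have hr0' : ‖u‖ ≠ 0 := by simpa [norm_pos_iff] using hu0
        field_simp
        ring

lemma Mconst_eq (α : ℝ) (d : ℕ) :
    Mconst α d = fallingFactorial α 4 + (2 * (d:ℝ) - 2) * fallingFactorial α 3
      + ((d:ℝ)^2 - 4 * d + 3) * fallingFactorial α 2
      - ((d:ℝ)^2 - 4 * d + 3) * fallingFactorial α 1 := by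
  simp only [Mconst, fallingFactorial, Finset.prod_range_succ, Finset.prod_range_zero]
  norm_num
  ring

lemma rpow_helper {r : ℝ} (hr : 0 < r) (α : ℝ) (k m : ℕ) :
    r ^ (α - k) * (r⁻¹) ^ m = r ^ (α - k - m) := by
  rw [inv_pow, ← Real.rpow_natCast r m, ← Real.rpow_neg hr.le, ← Real.rpow_add hr]
  ring_nf

lemma iteratedDeriv_rpow (α : ℝ) (k : ℕ) :
    ∀ r : ℝ, 0 < r → iteratedDeriv k (fun t : ℝ => t ^ α) r
      = fallingFactorial α k * r ^ (α - k) := by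
  induction k with
  | zero =>
    intro r hr
    simp [fallingFactorial]
  | succ k IH =>
    intro r hr
    rw [iteratedDeriv_succ]
    have heq : iteratedDeriv k (fun t : ℝ => t ^ α)
        =ᶠ[𝓝 r] fun t => fallingFactorial α k * t ^ (α - k) := by
      filter_upwards [isOpen_Ioi.mem_nhds (show r ∈ Set.Ioi (0:ℝ) from hr)] with t ht
      exact IH t ht
    rw [heq.deriv_eq]
    have hd : HasDerivAt (fun t : ℝ => fallingFactorial α k * t ^ (α - k))
        (fallingFactorial α k * ((α - k) * r ^ (α - k - 1))) r :=
      (Real.hasDerivAt_rpow_const (Or.inl hr.ne')).const_mul _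
    rw [hd.deriv]
    rw [show fallingFactorial α (k+1) = fallingFactorial α k * (α - k) from
      Finset.prod_range_succ _ _]
    rw [show (α - (k+1:ℕ) : ℝ) = α - k - 1 by push_cast; ring]
    ring

/-- Technical Lemma S2 of the paper. If `B` is four times differentiable
on `(0, L]` with `B^(k)(t) = (α)_k c t^{α−k} + o(t^{α−k})` as `t ↓ 0` for `k = 0, …, 4`,
then `u ↦ B(‖u‖)` has fourth-order partial derivatives on `{0 < ‖u‖ < L}` whose double sum
equals `c M(α,d) ‖u‖^{α−4} + o(‖u‖^{α−4})` as `u → 0`; in particular for `f(u) = ‖u‖^α`,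
the double sum equals `M(α,d) ‖u‖^{α−4}` exactly, for every `u ≠ 0`. -/
theorem radial_irregular_iterated_laplacian
    (d : ℕ) (hd : 1 ≤ d) (α c L : ℝ) (hL : 0 < L)
    (B : ℝ → ℝ)
    (hB : ContDiffOn ℝ 4 B (Set.Ioc 0 L))
    (hBk : ∀ k : ℕ, k ≤ 4 →
      (fun t : ℝ =>
          iteratedDerivWithin k B (Set.Ioc 0 L) t - fallingFactorial α k * c * t ^ (α - k))
        =o[𝓝[>] (0 : ℝ)] fun t : ℝ => t ^ (α - k)) :
    (ContDiffOn ℝ 4 (fun u : EuclideanSpace ℝ (Fin d) => B ‖u‖) (puncturedBall d L) ∧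
      (fun u : EuclideanSpace ℝ (Fin d) =>
          (∑ g : Fin d, ∑ g' : Fin d,
              iteratedFDerivWithin ℝ 4 (fun v : EuclideanSpace ℝ (Fin d) => B ‖v‖)
                (puncturedBall d L) u
                ![EuclideanSpace.single g' (1 : ℝ), EuclideanSpace.single g' (1 : ℝ),
                  EuclideanSpace.single g (1 : ℝ), EuclideanSpace.single g (1 : ℝ)])
            - c * Mconst α d * ‖u‖ ^ (α - 4))
        =o[𝓝[{u : EuclideanSpace ℝ (Fin d) | u ≠ 0}] 0]
          fun u => ‖u‖ ^ (α - 4)) ∧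
    ∀ u : EuclideanSpace ℝ (Fin d), u ≠ 0 →
      (∑ g : Fin d, ∑ g' : Fin d,
          iteratedFDeriv ℝ 4 (fun v : EuclideanSpace ℝ (Fin d) => ‖v‖ ^ α) u
            ![EuclideanSpace.single g' (1 : ℝ), EuclideanSpace.single g' (1 : ℝ),
              EuclideanSpace.single g (1 : ℝ), EuclideanSpace.single g (1 : ℝ)])
        = Mconst α d * ‖u‖ ^ (α - 4) := by
  have hcast : ∀ k : ℕ, k ≤ 4 → ((4 - k : ℕ) : ℝ) = 4 - k := fun k hk => by
    push_cast [Nat.cast_sub hk]; ring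
  refine ⟨⟨contDiffOn_radial hB, ?_⟩, ?_⟩
  · -- the little-o statement
    set F := 𝓝[{u : EuclideanSpace ℝ (Fin d) | u ≠ 0}] (0 : EuclideanSpace ℝ (Fin d)) with hF
    have hne : ∀ᶠ u in F, u ≠ (0 : EuclideanSpace ℝ (Fin d)) := eventually_mem_nhdsWithin
    have htend0 : Filter.Tendsto (fun u : EuclideanSpace ℝ (Fin d) => ‖u‖) F (𝓝 0) := by
      have : Filter.Tendsto (fun u : EuclideanSpace ℝ (Fin d) => ‖u‖) (𝓝 0) (𝓝 0) := by
        simpa using continuous_norm.tendsto (0 : EuclideanSpace ℝ (Fin d))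
      exact this.mono_left nhdsWithin_le_nhds
    have hlt : ∀ᶠ u in F, ‖u‖ < L := htend0.eventually_lt_const hL
    have hmem : ∀ᶠ u in F, u ∈ puncturedBall d L := by
      filter_upwards [hne, hlt] with u h1 h2
      exact ⟨norm_pos_iff.mpr h1, h2⟩
    have htend : Filter.Tendsto (fun u : EuclideanSpace ℝ (Fin d) => ‖u‖) F (𝓝[>] (0:ℝ)) := by
      rw [tendsto_nhdsWithin_iff]
      exact ⟨htend0, hne.mono fun u hu => norm_pos_iff.mpr hu⟩
    have hBk' : ∀ k : ℕ, k ≤ 4 →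
        (fun t : ℝ => iteratedDeriv k B t - fallingFactorial α k * c * t ^ (α - k))
          =o[𝓝[>] (0:ℝ)] fun t : ℝ => t ^ (α - k) := by
      intro k hk
      refine (hBk k hk).congr' ?_ EventuallyEq.rfl
      filter_upwards [Ioo_mem_nhdsGT hL] with t ht
      have hIoc : Set.Ioc 0 L =ᶠ[𝓝 t] (Set.univ : Set ℝ) := by
        rw [Filter.eventuallyEq_univ]
        exact Filter.mem_of_superset (isOpen_Ioo.mem_nhds ht) Set.Ioo_subset_Ioc_self
      rw [iteratedDerivWithin_eq_iteratedFDerivWithin, iteratedDeriv_eq_iteratedFDeriv,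
        iteratedFDerivWithin_congr_set hIoc, iteratedFDerivWithin_univ]
    have piece : ∀ k : ℕ, k ≤ 4 →
        (fun u : EuclideanSpace ℝ (Fin d) =>
            (iteratedDeriv k B ‖u‖ - fallingFactorial α k * c * ‖u‖ ^ (α - k))
              * (‖u‖⁻¹) ^ (4 - k))
          =o[F] fun u => ‖u‖ ^ (α - 4) := by
      intro k hk
      have h1 := (hBk' k hk).comp_tendsto htend
      have h2 := h1.mul_isBigO
        (Asymptotics.isBigO_refl (fun u : EuclideanSpace ℝ (Fin d) => (‖u‖⁻¹) ^ (4 - k)) F)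
      refine h2.congr' EventuallyEq.rfl ?_
      filter_upwards [hne] with u hu
      have hr : 0 < ‖u‖ := norm_pos_iff.mpr hu
      simp only [Function.comp_apply]
      rw [rpow_helper hr, hcast k hk]
      congr 1
      ring
    have main : (fun u : EuclideanSpace ℝ (Fin d) =>
          (∑ g : Fin d, ∑ g' : Fin d,
              iteratedFDerivWithin ℝ 4 (fun v : EuclideanSpace ℝ (Fin d) => B ‖v‖)
                (puncturedBall d L) u
                ![EuclideanSpace.single g' (1 : ℝ), EuclideanSpace.single g' (1 : ℝ),
                  EuclideanSpace.single g (1 : ℝ), EuclideanSpace.single g (1 : ℝ)])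
            - c * Mconst α d * ‖u‖ ^ (α - 4))
        =ᶠ[F] (fun u : EuclideanSpace ℝ (Fin d) =>
          (iteratedDeriv 4 B ‖u‖ - fallingFactorial α 4 * c * ‖u‖ ^ (α - ((4:ℕ):ℝ))) * (‖u‖⁻¹) ^ (4-4)
          + (2 * (d:ℝ) - 2) *
            ((iteratedDeriv 3 B ‖u‖ - fallingFactorial α 3 * c * ‖u‖ ^ (α - ((3:ℕ):ℝ))) * (‖u‖⁻¹) ^ (4-3))
          + ((d:ℝ)^2 - 4*d + 3) *
            ((iteratedDeriv 2 B ‖u‖ - fallingFactorial α 2 * c * ‖u‖ ^ (α - ((2:ℕ):ℝ))) * (‖u‖⁻¹) ^ (4-2))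
          - ((d:ℝ)^2 - 4*d + 3) *
            ((iteratedDeriv 1 B ‖u‖ - fallingFactorial α 1 * c * ‖u‖ ^ (α - ((1:ℕ):ℝ))) * (‖u‖⁻¹) ^ (4-1))) := by
      filter_upwards [hmem, hne] with u huS hu
      rw [Finset.sum_congr rfl fun g _ => Finset.sum_congr rfl fun g' _ =>
        main_formula hB huS g g']
      rw [sum_Ffour hu]
      have hr : 0 < ‖u‖ := norm_pos_iff.mpr hu
      have e3 : ‖u‖ ^ (α - (3:ℕ)) * (‖u‖⁻¹) ^ 1 = ‖u‖ ^ (α - 4) := by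
        rw [rpow_helper hr α 3 1]; congr 1; push_cast; ring
      have e2 : ‖u‖ ^ (α - (2:ℕ)) * (‖u‖⁻¹) ^ 2 = ‖u‖ ^ (α - 4) := by
        rw [rpow_helper hr α 2 2]; congr 1; push_cast; ring
      have e1 : ‖u‖ ^ (α - (1:ℕ)) * (‖u‖⁻¹) ^ 3 = ‖u‖ ^ (α - 4) := by
        rw [rpow_helper hr α 1 3]; congr 1; push_cast; ring
      push_cast at e1 e2 e3
      rw [Mconst_eq]
      norm_num
      linear_combination ((2 * (d:ℝ) - 2) * fallingFactorial α 3 * c) * e3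
        + (((d:ℝ)^2 - 4*d + 3) * fallingFactorial α 2 * c) * e2
        + (-((d:ℝ)^2 - 4*d + 3) * fallingFactorial α 1 * c) * e1
    refine Asymptotics.IsLittleO.congr' ?_ main.symm EventuallyEq.rfl
    exact (((piece 4 (by norm_num)).add
      ((piece 3 (by norm_num)).const_mul_left _)).add
      ((piece 2 (by norm_num)).const_mul_left _)).sub
      ((piece 1 (by norm_num)).const_mul_left _)
  · -- the exact rpow computation
    intro u hu
    have hrpos : 0 < ‖u‖ := norm_pos_iff.mpr hu
    set L' : ℝ := ‖u‖ + 1 with hL'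
    have hB' : ContDiffOn ℝ 4 (fun t : ℝ => t ^ α) (Set.Ioc 0 L') := fun r hr =>
      (Real.contDiffAt_rpow_const_of_ne (ne_of_gt hr.1)).contDiffWithinAt
    have huS : u ∈ puncturedBall d L' := ⟨hrpos, by rw [hL']; linarith⟩
    have conv : ∀ g g' : Fin d,
        iteratedFDeriv ℝ 4 (fun v : EuclideanSpace ℝ (Fin d) => ‖v‖ ^ α) u
            ![EuclideanSpace.single g' (1 : ℝ), EuclideanSpace.single g' (1 : ℝ),
              EuclideanSpace.single g (1 : ℝ), EuclideanSpace.single g (1 : ℝ)]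
          = Ffour (fun t : ℝ => t ^ α) g g' u := by
      intro g g'
      rw [← iteratedFDerivWithin_of_isOpen 4 isOpen_puncturedBall huS]
      exact main_formula hB' huS g g'
    rw [Finset.sum_congr rfl fun g _ => Finset.sum_congr rfl fun g' _ => conv g g']
    rw [sum_Ffour hu]
    rw [iteratedDeriv_rpow α 4 ‖u‖ hrpos, iteratedDeriv_rpow α 3 ‖u‖ hrpos,
      iteratedDeriv_rpow α 2 ‖u‖ hrpos, iteratedDeriv_rpow α 1 ‖u‖ hrpos]
    have e3 : ‖u‖ ^ (α - (3:ℕ)) * (‖u‖⁻¹) ^ 1 = ‖u‖ ^ (α - 4) := by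
      rw [rpow_helper hrpos α 3 1]; congr 1; push_cast; ring
    have e2 : ‖u‖ ^ (α - (2:ℕ)) * (‖u‖⁻¹) ^ 2 = ‖u‖ ^ (α - 4) := by
      rw [rpow_helper hrpos α 2 2]; congr 1; push_cast; ring
    have e1 : ‖u‖ ^ (α - (1:ℕ)) * (‖u‖⁻¹) ^ 3 = ‖u‖ ^ (α - 4) := by
      rw [rpow_helper hrpos α 1 3]; congr 1; push_cast; ring
    push_cast at e1 e2 e3
    rw [Mconst_eq]
    norm_num
    linear_combination ((2 * (d:ℝ) - 2) * fallingFactorial α 3) * e3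
      + (((d:ℝ)^2 - 4*d + 3) * fallingFactorial α 2) * e2
      + (-((d:ℝ)^2 - 4*d + 3) * fallingFactorial α 1) * e1
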